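/- Let μ be a Borel probability measure on ℝⁿ, I an interval of ℝ, Φ a C² convex function on I, D : ℝⁿ → (symmetric positive semidefinite n×n matrices), and C > 0. Assume the Φ-entropy inequality: for every C¹ I-valued function h with h, Φ(h) μ-integrable, Ent^Φ_μ(h) ≤ C ∫ Φ''(h(x)) ⟨∇h(x), D(x) ∇h(x)⟩ dμ(x). Let v : [0,∞) × ℝⁿ → I, with each v_t of class C¹ and v_t, Φ(v_t) μ-integrable, be such that H(t) = Ent^Φ_μ(v_t) is differentiable on [0,∞) with H'(t) = − ∫ Φ''(v_t(x)) ⟨∇v_t(x), D(x) ∇v_t(x)⟩ dμ(x) for all t ≥ 0. Then H(t) ≤ e^{−t/C} H(0) for all t ≥ 0; in particular, if v_t = u_t/u_∞ for a solution (u_t) of the Fokker–Planck equation with stationary state u_∞ = dμ/dx, the solution converges to u_∞ exponentially fast in Φ-entropy. -/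
import Mathlib


open MeasureTheory Matrix

/-- Partial derivative `∂h/∂x_i` of `h : ℝⁿ → ℝ` at `x`. -/
noncomputable def pd {n : ℕ} (i : Fin n) (h : (Fin n → ℝ) → ℝ) (x : Fin n → ℝ) : ℝ :=
  fderiv ℝ h x (Pi.single i 1)

/-- The carré du champ `Γ(h)(x) = ⟨∇h(x), D(x) ∇h(x)⟩` associated to the diffusion
matrix `D`. -/
noncomputable def gamD {n : ℕ} (D : (Fin n → ℝ) → Matrix (Fin n) (Fin n) ℝ)
    (h : (Fin n → ℝ) → ℝ) (x : Fin n → ℝ) : ℝ :=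
  (fun i => pd i h x) ⬝ᵥ (D x).mulVec fun i => pd i h x

/-- Let `μ` be a Borel probability measure on `ℝⁿ`, `I` an interval of `ℝ`
(i.e. a convex subset), `Φ` a `C²` convex function on `I`, `D(x)` symmetric positive
semidefinite matrices, and `C > 0`.  Assume the `Φ`-entropy inequality
`Ent^Φ_μ(h) ≤ C ∫ Φ''(h) ⟨∇h, D ∇h⟩ dμ` for every `C¹` `I`-valued `h` with `h, Φ(h)`
`μ`-integrable.  Let `v : [0,∞) × ℝⁿ → I`, each `v t` being `C¹` with `v t, Φ(v t)`
`μ`-integrable, be such that `H(t) = Ent^Φ_μ(v t)` is differentiable on `[0,∞)` with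
`H'(t) = −∫ Φ''(v t) ⟨∇v t, D ∇v t⟩ dμ` for all `t ≥ 0`.  Then `H(t) ≤ e^{−t/C} H(0)` for
all `t ≥ 0`. -/
theorem phi_entropy_exponential_decay
    {n : ℕ} (μ : Measure (Fin n → ℝ)) [IsProbabilityMeasure μ]
    (I : Set ℝ) (Φ : ℝ → ℝ) (hΦreg : ContDiff ℝ 2 Φ) (hΦ : ConvexOn ℝ I Φ)
    (D : (Fin n → ℝ) → Matrix (Fin n) (Fin n) ℝ)
    (hDsymm : ∀ x, (D x).IsSymm) (hDpos : ∀ x, (D x).PosSemidef)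
    (C : ℝ) (hC : 0 < C)
    (hPhiIneq : ∀ h : (Fin n → ℝ) → ℝ, ContDiff ℝ 1 h → (∀ x, h x ∈ I) →
      Integrable h μ → Integrable (fun x => Φ (h x)) μ →
      (∫ x, Φ (h x) ∂μ) - Φ (∫ x, h x ∂μ) ≤
        C * ∫ x, deriv (deriv Φ) (h x) * gamD D h x ∂μ)
    (v : ℝ → (Fin n → ℝ) → ℝ)
    (hvreg : ∀ t ≥ (0 : ℝ), ContDiff ℝ 1 (v t))
    (hvI : ∀ t ≥ (0 : ℝ), ∀ x, v t x ∈ I)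
    (hvint : ∀ t ≥ (0 : ℝ), Integrable (v t) μ)
    (hΦvint : ∀ t ≥ (0 : ℝ), Integrable (fun x => Φ (v t x)) μ)
    (H : ℝ → ℝ)
    (hH : ∀ t ≥ (0 : ℝ), H t = (∫ x, Φ (v t x) ∂μ) - Φ (∫ x, v t x ∂μ))
    (hH' : ∀ t ≥ (0 : ℝ),
      HasDerivWithinAt H (-∫ x, deriv (deriv Φ) (v t x) * gamD D (v t) x ∂μ)
        (Set.Ici (0 : ℝ)) t) :
    ∀ t ≥ (0 : ℝ), H t ≤ Real.exp (-t / C) * H 0 := by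
  set g : ℝ → ℝ := fun t => Real.exp (t / C) * H t with hg
  have hgderiv : ∀ t ≥ (0 : ℝ), HasDerivWithinAt g
      (Real.exp (t / C) * (1 / C) * H t +
        Real.exp (t / C) * (-∫ x, deriv (deriv Φ) (v t x) * gamD D (v t) x ∂μ))
      (Set.Ici (0 : ℝ)) t := by
    intro t ht
    have h1 : HasDerivAt (fun s => Real.exp (s / C)) (Real.exp (t / C) * (1 / C)) t := by
      have := ((hasDerivAt_id t).div_const C).exp
      simpa using this
    exact (h1.hasDerivWithinAt).mul (hH' t ht)
  have hgnonpos : ∀ t ∈ Set.Ioi (0 : ℝ), deriv g t ≤ 0 := by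
    intro t ht
    have ht' : (0 : ℝ) ≤ t := le_of_lt ht
    have hmem : Set.Ici (0 : ℝ) ∈ nhds t := Ici_mem_nhds ht
    have hd : HasDerivAt g
        (Real.exp (t / C) * (1 / C) * H t +
          Real.exp (t / C) * (-∫ x, deriv (deriv Φ) (v t x) * gamD D (v t) x ∂μ)) t :=
      (hgderiv t ht').hasDerivAt hmem
    rw [hd.deriv]
    have hkey : H t ≤ C * ∫ x, deriv (deriv Φ) (v t x) * gamD D (v t) x ∂μ := by
      rw [hH t ht']
      exact hPhiIneq (v t) (hvreg t ht') (hvI t ht') (hvint t ht') (hΦvint t ht')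
    have hexp : (0 : ℝ) < Real.exp (t / C) := Real.exp_pos _
    have : Real.exp (t / C) * (1 / C) * H t ≤
        Real.exp (t / C) * (∫ x, deriv (deriv Φ) (v t x) * gamD D (v t) x ∂μ) := by
      have h2 : (1 / C) * H t ≤ ∫ x, deriv (deriv Φ) (v t x) * gamD D (v t) x ∂μ := by
        rw [div_mul_eq_mul_div, one_mul, div_le_iff₀ hC] at *
        linarith [hkey]
      calc Real.exp (t / C) * (1 / C) * H t = Real.exp (t / C) * ((1 / C) * H t) := by ring
        _ ≤ _ := by exact mul_le_mul_of_nonneg_left h2 hexp.le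
    linarith
  have hcont : ContinuousOn g (Set.Ici 0) := fun t ht =>
    (hgderiv t ht).continuousWithinAt
  have hanti : AntitoneOn g (Set.Ici 0) := by
    apply antitoneOn_of_deriv_nonpos (convex_Ici 0) hcont
    · intro t ht
      rw [interior_Ici] at ht
      exact ((hgderiv t ht.le).hasDerivAt (Ici_mem_nhds ht)).differentiableAt.differentiableWithinAt
    · intro t ht
      rw [interior_Ici] at ht
      exact hgnonpos t ht
  intro t ht
  have := hanti (Set.self_mem_Ici) ht ht
  have hg0 : g 0 = H 0 := by simp [hg]
  have hgt : g t = Real.exp (t / C) * H t := rfl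
  rw [hg0, hgt] at this
  have hexp : (0 : ℝ) < Real.exp (t / C) := Real.exp_pos _
  have := (div_le_div_iff_of_pos_right hexp).2 this
  calc H t = Real.exp (t / C) * H t / Real.exp (t / C) := by field_simp
    _ ≤ H 0 / Real.exp (t / C) := by gcongr
    _ = Real.exp (-t / C) * H 0 := by
        rw [neg_div, Real.exp_neg]; ring
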